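/- Norm bound for inverse square root perturbation: let A and B be symmetric positive definite matrices with smallest eigenvalues λ_min(A) > 0, and suppose ‖A^{−1}‖·‖B − A‖ ≤ 1/2. Then ‖B^{−1/2} − A^{−1/2}‖ ≤ C · λ_min(A)^{−1/2} · ‖A^{−1}‖ ‖B − A‖ / (1 − ‖A^{−1}‖‖B − A‖) for an absolute constant C, via the convergent series expansion of (A B^{−1})^{1/2} around the identity. -/

import Mathlib

open Matrix
open scoped Matrix.Norms.L2Operator

set_option synthInstance.maxHeartbeats 2000000
set_option maxHeartbeats 2000000

variable {p : ℕ}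
noncomputable def phi (M : Matrix (Fin p) (Fin p) ℝ) :
    EuclideanSpace ℝ (Fin p) →L[ℝ] EuclideanSpace ℝ (Fin p) :=
  Matrix.toEuclideanCLM (𝕜 := ℝ) M

lemma phi_selfAdj {M : Matrix (Fin p) (Fin p) ℝ} (hM : M.IsHermitian) :
    _root_.IsSelfAdjoint (phi M) := by
  rw [_root_.IsSelfAdjoint, phi, ← map_star, star_eq_conjTranspose, hM.eq]

lemma phi_inner_left {M : Matrix (Fin p) (Fin p) ℝ} (hM : M.IsHermitian)
    (x y : EuclideanSpace ℝ (Fin p)) :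
    (inner ℝ (phi M x) y : ℝ) = inner ℝ x (phi M y) := by
  rw [← ContinuousLinearMap.adjoint_inner_left, (phi_selfAdj hM).adjoint_eq]

lemma phi_mul (M N : Matrix (Fin p) (Fin p) ℝ) (x : EuclideanSpace ℝ (Fin p)) :
    phi (M * N) x = phi M (phi N x) := by
  rw [phi, _root_.map_mul]; rfl

lemma phi_posdef {M : Matrix (Fin p) (Fin p) ℝ} (hM : M.PosDef)
    (x : EuclideanSpace ℝ (Fin p)) (hx : x ≠ 0) : (0:ℝ) < inner ℝ x (phi M x) := by
  have hx' : (⇑x : Fin p → ℝ) ≠ 0 := by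
    intro h; apply hx; ext i; exact congrFun h i
  have := hM.dotProduct_mulVec_pos hx'
  simp only [PiLp.inner_apply, RCLike.inner_apply, dotProduct, conj_trivial] at this ⊢
  refine this.trans_eq (Finset.sum_congr rfl fun i _ => ?_)
  rw [mul_comm]; rfl

lemma phi_eigen {M : Matrix (Fin p) (Fin p) ℝ} (hM : M.IsHermitian) (i : Fin p) :
    phi M (hM.eigenvectorBasis i) = hM.eigenvalues i • hM.eigenvectorBasis i := by
  have h := hM.mulVec_eigenvectorBasis i
  ext j
  have : ⇑(phi M (hM.eigenvectorBasis i)) = M *ᵥ ⇑(hM.eigenvectorBasis i) := rfl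
  rw [show (phi M (hM.eigenvectorBasis i)) j = (M *ᵥ ⇑(hM.eigenvectorBasis i)) j from congrFun this j, h]
  simp

lemma repr_phi {M : Matrix (Fin p) (Fin p) ℝ} (hM : M.IsHermitian)
    (x : EuclideanSpace ℝ (Fin p)) (i : Fin p) :
    hM.eigenvectorBasis.repr (phi M x) i
      = hM.eigenvalues i * hM.eigenvectorBasis.repr x i := by
  rw [OrthonormalBasis.repr_apply_apply, OrthonormalBasis.repr_apply_apply,
    ← phi_inner_left hM, phi_eigen hM i, inner_smul_left]
  simp

lemma inner_eq_sum_repr (b : OrthonormalBasis (Fin p) ℝ (EuclideanSpace ℝ (Fin p)))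
    (x y : EuclideanSpace ℝ (Fin p)) :
    (inner ℝ x y : ℝ) = ∑ i, b.repr x i * b.repr y i := by
  rw [← OrthonormalBasis.sum_inner_mul_inner b x y]
  refine Finset.sum_congr rfl fun i _ => ?_
  rw [OrthonormalBasis.repr_apply_apply, OrthonormalBasis.repr_apply_apply,
    real_inner_comm x (b i)]

lemma norm_sq_eq_sum_repr (b : OrthonormalBasis (Fin p) ℝ (EuclideanSpace ℝ (Fin p)))
    (x : EuclideanSpace ℝ (Fin p)) :
    ‖x‖ ^ 2 = ∑ i, (b.repr x i) ^ 2 := by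
  rw [← real_inner_self_eq_norm_sq, inner_eq_sum_repr b]
  exact Finset.sum_congr rfl fun i _ => (sq _).symm

lemma eigen_abs_le_norm {M : Matrix (Fin p) (Fin p) ℝ} {μ : ℝ}
    {v : EuclideanSpace ℝ (Fin p)} (hv : ‖v‖ = 1) (h : phi M v = μ • v) :
    |μ| ≤ ‖M‖ := by
  have h1 : ‖phi M v‖ ≤ ‖phi M‖ * ‖v‖ := (phi M).le_opNorm v
  rw [h, norm_smul, hv, mul_one, mul_one] at h1
  exact (show |μ| ≤ ‖phi M‖ by simpa using h1)

lemma form_ge {M : Matrix (Fin p) (Fin p) ℝ} (hM : M.IsHermitian) {c : ℝ}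
    (h : ∀ i, c ≤ hM.eigenvalues i) (x : EuclideanSpace ℝ (Fin p)) :
    c * ‖x‖ ^ 2 ≤ inner ℝ x (phi M x) := by
  rw [inner_eq_sum_repr hM.eigenvectorBasis, norm_sq_eq_sum_repr hM.eigenvectorBasis,
    Finset.mul_sum]
  refine Finset.sum_le_sum fun i _ => ?_
  rw [repr_phi hM]
  have := sq_nonneg (hM.eigenvectorBasis.repr x i)
  nlinarith [h i]

lemma psd_norm_phi_sq {M : Matrix (Fin p) (Fin p) ℝ} (hM : M.IsHermitian)
    (h0 : ∀ i, 0 ≤ hM.eigenvalues i) (x : EuclideanSpace ℝ (Fin p)) :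
    ‖phi M x‖ ^ 2 ≤ ‖M‖ * inner ℝ x (phi M x) := by
  rw [inner_eq_sum_repr hM.eigenvectorBasis, norm_sq_eq_sum_repr hM.eigenvectorBasis,
    Finset.mul_sum]
  refine Finset.sum_le_sum fun i _ => ?_
  rw [repr_phi hM]
  have hle : hM.eigenvalues i ≤ ‖M‖ := by
    have := eigen_abs_le_norm (M := M) (hM.eigenvectorBasis.orthonormal.1 i) (phi_eigen hM i)
    exact (le_abs_self _).trans this
  nlinarith [mul_nonneg (mul_nonneg (sub_nonneg.mpr hle) (h0 i))
    (sq_nonneg (hM.eigenvectorBasis.repr x i)), h0 i, sq_nonneg (hM.eigenvectorBasis.repr x i)]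

lemma exists_top_eigen [Nonempty (Fin p)] {M : Matrix (Fin p) (Fin p) ℝ}
    (hM : M.IsHermitian) :
    ∃ (v : EuclideanSpace ℝ (Fin p)) (μ : ℝ), ‖v‖ = 1 ∧ phi M v = μ • v ∧ ‖M‖ = |μ| := by
  obtain ⟨i, -, hi⟩ := Finset.exists_max_image Finset.univ (fun i => |hM.eigenvalues i|)
    ⟨Classical.arbitrary _, Finset.mem_univ _⟩
  refine ⟨hM.eigenvectorBasis i, hM.eigenvalues i,
    hM.eigenvectorBasis.orthonormal.1 i, phi_eigen hM i, le_antisymm ?_ ?_⟩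
  · show ‖phi M‖ ≤ _
    refine ContinuousLinearMap.opNorm_le_bound _ (abs_nonneg _) fun x => ?_
    have hsq : ‖phi M x‖ ^ 2 ≤ (|hM.eigenvalues i| * ‖x‖) ^ 2 := by
      rw [norm_sq_eq_sum_repr hM.eigenvectorBasis, mul_pow,
        norm_sq_eq_sum_repr hM.eigenvectorBasis x, Finset.mul_sum]
      refine Finset.sum_le_sum fun j _ => ?_
      rw [repr_phi hM]
      have h1 := hi j (Finset.mem_univ j)
      have h2 := sq_nonneg (hM.eigenvectorBasis.repr x j)
      have h3 := abs_nonneg (hM.eigenvalues j)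
      have h4 : hM.eigenvalues j ^ 2 ≤ |hM.eigenvalues i| ^ 2 := by
        rw [← sq_abs (hM.eigenvalues j)]
        exact pow_le_pow_left₀ h3 h1 2
      nlinarith [h2, h4]
    have hs := Real.sqrt_le_sqrt hsq
    rwa [Real.sqrt_sq (norm_nonneg _), Real.sqrt_sq (by positivity)] at hs
  · exact eigen_abs_le_norm (hM.eigenvectorBasis.orthonormal.1 i) (phi_eigen hM i)

lemma inv_norm_le {M : Matrix (Fin p) (Fin p) ℝ} (hdet : IsUnit M.det) {c : ℝ}
    (hc : 0 < c) (h : ∀ x : EuclideanSpace ℝ (Fin p), c * ‖x‖ ^ 2 ≤ inner ℝ x (phi M x)) :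
    ‖M⁻¹‖ ≤ 1 / c := by
  show ‖phi M⁻¹‖ ≤ 1 / c
  refine ContinuousLinearMap.opNorm_le_bound _ (by positivity) fun y => ?_
  set x := phi M⁻¹ y with hx
  have hMx : phi M x = y := by
    rw [hx, ← phi_mul, Matrix.mul_nonsing_inv M hdet, phi]
    simp
  have h1 : c * ‖x‖ ^ 2 ≤ inner ℝ x y := by rw [← hMx]; exact h x
  have h2 : (inner ℝ x y : ℝ) ≤ ‖x‖ * ‖y‖ := real_inner_le_norm x y
  rcases eq_or_ne ‖x‖ 0 with h0 | h0
  · rw [h0]; positivity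
  · have hxpos : 0 < ‖x‖ := lt_of_le_of_ne (norm_nonneg _) (Ne.symm h0)
    rw [div_mul_eq_mul_div, le_div_iff₀ hc]
    nlinarith [h1.trans h2, hxpos]

lemma eigen_abs_le_norm' {M : Matrix (Fin p) (Fin p) ℝ} {μ : ℝ} {v : Fin p → ℝ}
    (hv : v ≠ 0) (h : M *ᵥ v = μ • v) : |μ| ≤ ‖M‖ := by
  set x : EuclideanSpace ℝ (Fin p) := (WithLp.equiv 2 _).symm v with hxdef
  have hx0 : x ≠ 0 := by
    intro hc; apply hv; ext i; exact congrFun (congrArg (WithLp.equiv 2 _) hc) i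
  have hx : phi M x = μ • x := by
    ext j
    exact congrFun h j
  have h1 : ‖phi M x‖ ≤ ‖phi M‖ * ‖x‖ := (phi M).le_opNorm x
  rw [hx, norm_smul] at h1
  have hxn : 0 < ‖x‖ := norm_pos_iff.mpr hx0
  have : ‖M‖ = ‖phi M‖ := rfl
  rw [this]
  calc |μ| = ‖μ‖ := (Real.norm_eq_abs μ).symm
  _ ≤ ‖phi M‖ := by
      by_contra hcon
      push_neg at hcon
      nlinarith

lemma eig_nonneg {M : Matrix (Fin p) (Fin p) ℝ} (hM : M.PosDef) (i : Fin p) :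
    0 ≤ hM.1.eigenvalues i := (hM.eigenvalues_pos i).le

/-- norm bound for the inverse square root perturbation. There is an absolute
constant `C` such that for all symmetric positive definite `A, B` with smallest eigenvalue
`λ_min(A) = lm > 0` and `‖A⁻¹‖ ‖B - A‖ ≤ 1/2`, the positive square roots `SA = A^{-1/2}`,
`SB = B^{-1/2}` satisfy
`‖SB - SA‖ ≤ C lm^{-1/2} ‖A⁻¹‖ ‖B - A‖ / (1 - ‖A⁻¹‖ ‖B - A‖)`. -/
theorem inverse_sqrt_perturbation_bound :
    ∃ C : ℝ, 0 < C ∧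
      ∀ (p : ℕ) (A B SA SB : Matrix (Fin p) (Fin p) ℝ) (lm : ℝ),
        A.PosDef → B.PosDef → A.IsSymm → B.IsSymm → 0 < lm →
        -- `lm` is the smallest eigenvalue of `A`
        (∀ (μ : ℝ) (v : Fin p → ℝ), v ≠ 0 → A.mulVec v = μ • v → lm ≤ μ) →
        (∃ v : Fin p → ℝ, v ≠ 0 ∧ A.mulVec v = lm • v) →
        -- `SA`, `SB` are the positive square roots of `A⁻¹`, `B⁻¹`
        SA.PosDef → SB.PosDef → SA * SA = A⁻¹ → SB * SB = B⁻¹ →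
        ‖A⁻¹‖ * ‖B - A‖ ≤ 1 / 2 →
        ‖SB - SA‖ ≤ C * (Real.sqrt lm)⁻¹ * (‖A⁻¹‖ * ‖B - A‖) / (1 - ‖A⁻¹‖ * ‖B - A‖) := by
  refine ⟨2, by norm_num, ?_⟩
  intro p A B SA SB lm hA hB hAs hBs hlm hmin hex hSA hSB hSA2 hSB2 ht
  obtain ⟨v0, hv00, hv0e⟩ := hex
  have hnp : Nonempty (Fin p) := by
    rcases isEmpty_or_nonempty (Fin p) with h | h
    · exact absurd (funext fun i => (IsEmpty.false i).elim) hv00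
    · exact h
  set a : ℝ := ‖A⁻¹‖ with hadef
  set e : ℝ := ‖B - A‖ with hedef
  have he0 : (0:ℝ) ≤ e := norm_nonneg _
  have ha0 : (0:ℝ) ≤ a := norm_nonneg _
  have hAh : A.IsHermitian := hA.isHermitian
  have hBh : B.IsHermitian := hB.isHermitian
  have hSAh : SA.IsHermitian := hSA.isHermitian
  have hSBh : SB.IsHermitian := hSB.isHermitian
  have detA : IsUnit A.det := hA.det_pos.ne'.isUnit
  have detB : IsUnit B.det := hB.det_pos.ne'.isUnit
  -- Step: 1 ≤ a * lm
  have hinv_eig : A⁻¹ *ᵥ v0 = lm⁻¹ • v0 := by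
    have h1 : A⁻¹ *ᵥ (A *ᵥ v0) = v0 := by
      rw [mulVec_mulVec, Matrix.nonsing_inv_mul A detA, one_mulVec]
    rw [hv0e, mulVec_smul] at h1
    have h2 : lm⁻¹ • (lm • (A⁻¹ *ᵥ v0)) = lm⁻¹ • v0 := by rw [h1]
    rwa [smul_smul, inv_mul_cancel₀ hlm.ne', one_smul] at h2
  have halm : 1 ≤ a * lm := by
    have := eigen_abs_le_norm' hv00 hinv_eig
    rw [abs_of_pos (by positivity)] at this
    calc (1:ℝ) = lm⁻¹ * lm := by rw [inv_mul_cancel₀ hlm.ne']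
    _ ≤ a * lm := by nlinarith
  -- Step: quadratic form lower bound for A
  have heigA : ∀ i, lm ≤ hAh.eigenvalues i := by
    intro i
    refine hmin _ (⇑(hAh.eigenvectorBasis i)) ?_ (hAh.mulVec_eigenvectorBasis i)
    intro hc
    have : hAh.eigenvectorBasis i = 0 := by ext j; exact congrFun hc j
    have h1 := hAh.eigenvectorBasis.orthonormal.1 i
    rw [this, norm_zero] at h1
    norm_num at h1
  have hformA : ∀ x : EuclideanSpace ℝ (Fin p), lm * ‖x‖ ^ 2 ≤ inner ℝ x (phi A x) :=
    form_ge hAh heigA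
  -- Step: e ≤ lm / 2
  have helm : e ≤ lm / 2 := by nlinarith
  -- Step: quadratic form lower bound for B
  have hformB : ∀ x : EuclideanSpace ℝ (Fin p), lm / 2 * ‖x‖ ^ 2 ≤ inner ℝ x (phi B x) := by
    intro x
    have hBA : phi B x = phi A x + phi (B - A) x := by
      rw [phi, phi, phi]
      have : B = A + (B - A) := by abel
      rw [show Matrix.toEuclideanCLM (𝕜 := ℝ) B
          = Matrix.toEuclideanCLM (𝕜 := ℝ) (A + (B - A)) from by rw [← this], map_add]
      rfl
    have hbound : |(inner ℝ x (phi (B - A) x) : ℝ)| ≤ e * ‖x‖ ^ 2 := by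
      calc |(inner ℝ x (phi (B - A) x) : ℝ)| ≤ ‖x‖ * ‖phi (B - A) x‖ := abs_real_inner_le_norm _ _
      _ ≤ ‖x‖ * (‖phi (B - A)‖ * ‖x‖) := by
          have := (phi (B - A)).le_opNorm x
          nlinarith [norm_nonneg x]
      _ = e * ‖x‖ ^ 2 := by rw [hedef]; show _ = ‖phi (B - A)‖ * _; ring
    rw [hBA, inner_add_right]
    have h1 := hformA x
    have h2 := abs_le.mp hbound
    nlinarith [sq_nonneg ‖x‖]
  -- Step: ‖B⁻¹‖ bound
  have hBinv : ‖B⁻¹‖ ≤ 1 / (lm / 2) := inv_norm_le detB (by positivity) hformB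
  -- Step: norms of square roots
  have hsA2 : ‖SA‖ ^ 2 = a := by
    rw [hadef, ← hSA2, sq]
    conv_rhs => rw [show SA * SA = star SA * SA from by
      rw [star_eq_conjTranspose, hSAh.eq]]
    exact (CStarRing.norm_star_mul_self).symm
  have hsB2 : ‖SB‖ ^ 2 = ‖B⁻¹‖ := by
    rw [← hSB2, sq]
    conv_rhs => rw [show SB * SB = star SB * SB from by
      rw [star_eq_conjTranspose, hSBh.eq]]
    exact (CStarRing.norm_star_mul_self).symm
  -- top eigenvector of the difference
  have hΔh : (SB - SA).IsHermitian := hSBh.sub hSAh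
  obtain ⟨v, μ, hv1, hveq, hnormΔ⟩ := exists_top_eigen hΔh
  have hv0' : v ≠ 0 := by intro hc; rw [hc, norm_zero] at hv1; norm_num at hv1
  set α : ℝ := inner ℝ v (phi SA v) with hα
  set β : ℝ := inner ℝ v (phi SB v) with hβ
  have hαpos : 0 < α := phi_posdef hSA v hv0'
  have hβpos : 0 < β := phi_posdef hSB v hv0'
  have hAinvh : A⁻¹.IsHermitian := hAh.inv
  -- the key identity
  have hsplit : B⁻¹ - A⁻¹ = SB * (SB - SA) + (SB - SA) * SA := by
    rw [← hSA2, ← hSB2]; noncomm_ring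
  have t1 : (inner ℝ v (phi (SB * (SB - SA)) v) : ℝ) = μ * β := by
    rw [phi_mul, hveq, _root_.map_smul, real_inner_smul_right]
  have t2 : (inner ℝ v (phi ((SB - SA) * SA) v) : ℝ) = μ * α := by
    rw [phi_mul, ← phi_inner_left hΔh v (phi SA v), hveq, real_inner_smul_left]
  have hid : (inner ℝ v (phi (B⁻¹ - A⁻¹) v) : ℝ) = μ * (α + β) := by
    have hadd : phi (B⁻¹ - A⁻¹) v
        = phi (SB * (SB - SA)) v + phi ((SB - SA) * SA) v := by
      rw [hsplit, phi, map_add]; rfl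
    rw [hadd, inner_add_right, t1, t2]; ring
  -- factorization and Cauchy-Schwarz bound
  have hfact : B⁻¹ - A⁻¹ = A⁻¹ * ((A - B) * B⁻¹) := by
    rw [sub_mul, mul_sub, ← Matrix.mul_assoc, Matrix.nonsing_inv_mul A detA, one_mul,
      Matrix.mul_nonsing_inv B detB, mul_one]
  have hnormAB : ‖phi (A - B)‖ = e := by
    rw [hedef]; show ‖A - B‖ = ‖B - A‖; exact norm_sub_rev A B
  have hCS : |(inner ℝ v (phi (B⁻¹ - A⁻¹) v) : ℝ)| ≤ ‖phi A⁻¹ v‖ * (e * ‖phi B⁻¹ v‖) := by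
    rw [hfact, phi_mul, ← phi_inner_left hAinvh, phi_mul]
    calc |(inner ℝ (phi A⁻¹ v) (phi (A - B) (phi B⁻¹ v)) : ℝ)|
        ≤ ‖phi A⁻¹ v‖ * ‖phi (A - B) (phi B⁻¹ v)‖ := abs_real_inner_le_norm _ _
      _ ≤ ‖phi A⁻¹ v‖ * (e * ‖phi B⁻¹ v‖) := by
          have h1 : ‖phi (A - B) (phi B⁻¹ v)‖ ≤ e * ‖phi B⁻¹ v‖ := by
            have := (phi (A - B)).le_opNorm (phi B⁻¹ v)
            rwa [hnormAB] at this
          exact mul_le_mul_of_nonneg_left h1 (norm_nonneg _)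
  -- norm bounds on `phi A⁻¹ v` and `phi B⁻¹ v`
  have sqrt_bound : ∀ (M : Matrix (Fin p) (Fin p) ℝ) (hM : M.PosDef),
      ‖phi M (phi M v)‖ ≤ ‖M‖ * Real.sqrt (‖M‖ * inner ℝ v (phi M v)) := by
    intro M hM
    have h2 : ‖phi M v‖ ≤ Real.sqrt (‖M‖ * inner ℝ v (phi M v)) := by
      have h3 := psd_norm_phi_sq hM.isHermitian (fun i => (hM.eigenvalues_pos i).le) v
      have h4 := Real.sqrt_le_sqrt h3
      rwa [Real.sqrt_sq (norm_nonneg _)] at h4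
    calc ‖phi M (phi M v)‖ ≤ ‖phi M‖ * ‖phi M v‖ := (phi M).le_opNorm _
      _ ≤ ‖M‖ * Real.sqrt (‖M‖ * inner ℝ v (phi M v)) :=
        mul_le_mul_of_nonneg_left h2 (norm_nonneg M)
  have hAv : ‖phi A⁻¹ v‖ ≤ ‖SA‖ * Real.sqrt (‖SA‖ * α) := by
    have h1 : phi A⁻¹ v = phi SA (phi SA v) := by rw [← phi_mul, hSA2]
    rw [h1, hα]; exact sqrt_bound SA hSA
  have hBv : ‖phi B⁻¹ v‖ ≤ ‖SB‖ * Real.sqrt (‖SB‖ * β) := by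
    have h1 : phi B⁻¹ v = phi SB (phi SB v) := by rw [← phi_mul, hSB2]
    rw [h1, hβ]; exact sqrt_bound SB hSB
  -- assemble the chain
  set q : ℝ := ‖SA‖ * ‖SB‖ with hqdef
  have hq0 : (0:ℝ) ≤ q := by positivity
  set s : ℝ := Real.sqrt q with hsdef
  have hs0 : (0:ℝ) ≤ s := Real.sqrt_nonneg _
  have hs2 : s ^ 2 = q := Real.sq_sqrt hq0
  have hmu : |μ| * (α + β) ≤ e * q * (s * ((α + β) / 2)) := by
    have hL : |μ| * (α + β) = |(inner ℝ v (phi (B⁻¹ - A⁻¹) v) : ℝ)| := by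
      rw [hid, abs_mul, abs_of_pos (by linarith : (0:ℝ) < α + β)]
    have hsq : Real.sqrt (‖SA‖ * α) * Real.sqrt (‖SB‖ * β)
        = s * Real.sqrt (α * β) := by
      rw [← Real.sqrt_mul (by positivity), ← Real.sqrt_mul hq0,
        show ‖SA‖ * α * (‖SB‖ * β) = ‖SA‖ * ‖SB‖ * (α * β) by ring]
    have hamgm : Real.sqrt (α * β) ≤ (α + β) / 2 := by
      have h5 : α * β ≤ ((α + β) / 2) ^ 2 := by nlinarith [sq_nonneg (α - β)]
      have h6 := Real.sqrt_le_sqrt h5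
      rwa [Real.sqrt_sq (by linarith : (0:ℝ) ≤ (α + β) / 2)] at h6
    have hR : ‖phi A⁻¹ v‖ * (e * ‖phi B⁻¹ v‖)
        ≤ e * q * (s * ((α + β) / 2)) := by
      have h7 : ‖phi A⁻¹ v‖ * (e * ‖phi B⁻¹ v‖)
          ≤ (‖SA‖ * Real.sqrt (‖SA‖ * α)) * (e * (‖SB‖ * Real.sqrt (‖SB‖ * β))) := by
        exact mul_le_mul hAv (mul_le_mul_of_nonneg_left hBv he0)
          (mul_nonneg he0 (norm_nonneg _))
          (mul_nonneg (norm_nonneg _) (Real.sqrt_nonneg _))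
      calc ‖phi A⁻¹ v‖ * (e * ‖phi B⁻¹ v‖)
          ≤ (‖SA‖ * Real.sqrt (‖SA‖ * α)) * (e * (‖SB‖ * Real.sqrt (‖SB‖ * β))) := h7
        _ = e * q * (Real.sqrt (‖SA‖ * α) * Real.sqrt (‖SB‖ * β)) := by rw [hqdef]; ring
        _ = e * q * (s * Real.sqrt (α * β)) := by rw [hsq]
        _ ≤ e * q * (s * ((α + β) / 2)) := by
            exact mul_le_mul_of_nonneg_left (mul_le_mul_of_nonneg_left hamgm hs0)
              (mul_nonneg he0 hq0)
    rw [hL]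
    exact hCS.trans hR
  have hmain : ‖SB - SA‖ ≤ e / 2 * (q * s) := by
    rw [hnormΔ]
    have h8 : |μ| * (α + β) ≤ (e / 2 * (q * s)) * (α + β) := by
      calc |μ| * (α + β) ≤ e * q * (s * ((α + β) / 2)) := hmu
        _ = (e / 2 * (q * s)) * (α + β) := by ring
    exact le_of_mul_le_mul_right h8 (by linarith)
  -- numeric endgame
  set r : ℝ := Real.sqrt lm with hrdef
  have hr0 : (0:ℝ) < r := Real.sqrt_pos.mpr hlm
  have hr2 : r ^ 2 = lm := Real.sq_sqrt hlm.le
  have hq2r : q ^ 2 * lm ≤ 2 * a := by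
    have h1 : q ^ 2 = a * ‖B⁻¹‖ := by rw [hqdef, mul_pow, hsA2, hsB2]
    have h2 : a * ‖B⁻¹‖ ≤ a * (1 / (lm / 2)) := mul_le_mul_of_nonneg_left hBinv ha0
    have h3 : a * (1 / (lm / 2)) * lm = 2 * a := by field_simp
    calc q ^ 2 * lm = a * ‖B⁻¹‖ * lm := by rw [h1]
      _ ≤ a * (1 / (lm / 2)) * lm := mul_le_mul_of_nonneg_right h2 hlm.le
      _ = 2 * a := h3
  have claim : q * s * r ≤ 4 * a := by
    have e1 : (q * s * r) ^ 4 * r ^ 2 = (q ^ 2 * lm) ^ 3 := by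
      rw [← hs2, ← hr2]; ring
    have e2 : (q ^ 2 * lm) ^ 3 ≤ (2 * a) ^ 3 :=
      pow_le_pow_left₀ (mul_nonneg (sq_nonneg q) hlm.le) hq2r 3
    have e3 : (2 * a) ^ 3 ≤ (4 * a) ^ 4 * r ^ 2 := by
      have h9 : 256 * a ^ 3 * (a * lm) ≥ 256 * a ^ 3 * 1 :=
        mul_le_mul_of_nonneg_left halm
          (by nlinarith [pow_nonneg ha0 3] : (0:ℝ) ≤ 256 * a ^ 3)
      nlinarith [pow_nonneg ha0 3, hr2]
    have e5 : (q * s * r) ^ 4 ≤ (4 * a) ^ 4 := by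
      have e4 : (q * s * r) ^ 4 * r ^ 2 ≤ (4 * a) ^ 4 * r ^ 2 := by
        rw [e1]; exact e2.trans e3
      exact le_of_mul_le_mul_right e4 (pow_pos hr0 2)
    exact le_of_pow_le_pow_left₀ (by norm_num) (by linarith : (0:ℝ) ≤ 4 * a) e5
  have hden : (0:ℝ) < 1 - a * e := by linarith
  have hΔr : ‖SB - SA‖ * r ≤ 2 * (a * e) := by
    calc ‖SB - SA‖ * r ≤ (e / 2 * (q * s)) * r := mul_le_mul_of_nonneg_right hmain hr0.le
      _ = e / 2 * (q * s * r) := by ring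
      _ ≤ e / 2 * (4 * a) := mul_le_mul_of_nonneg_left claim (by linarith)
      _ = 2 * (a * e) := by ring
  have hΔle : ‖SB - SA‖ ≤ 2 * r⁻¹ * (a * e) := by
    rw [show (2:ℝ) * r⁻¹ * (a * e) = 2 * (a * e) / r from by field_simp]
    rw [le_div_iff₀ hr0]
    exact hΔr
  rw [le_div_iff₀ hden]
  calc ‖SB - SA‖ * (1 - a * e) ≤ ‖SB - SA‖ * 1 :=
      mul_le_mul_of_nonneg_left (by nlinarith [mul_nonneg ha0 he0]) (norm_nonneg _)
    _ = ‖SB - SA‖ := mul_one _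
    _ ≤ 2 * r⁻¹ * (a * e) := hΔle
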